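/- Let x, y, w be monomials in P_k and let r, s be positive integers such that ω_i(x) = 0 for all i > r, ω_s(w) ≠ 0, and ω_i(w) = 0 for all i > s. (i) If w is inadmissible, then the monomial x·w^{2^r} is inadmissible. (ii) If w is strictly inadmissible, then the monomial x·w^{2^r}·y^{2^{r+s}} is inadmissible. -/

import Mathlib

open MvPolynomial

/-- The total Steenrod square on `P_k = F_2[x_1,…,x_k]`, the algebra map with
`Sq(x_j) = x_j + x_j^2`. -/
noncomputable def SqTotal (k : ℕ) :
    MvPolynomial (Fin k) (ZMod 2) →ₐ[ZMod 2] MvPolynomial (Fin k) (ZMod 2) :=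
  aeval fun j => X j + X j ^ 2

/-- The Steenrod square `Sq^i : P_k → P_k`, sending a homogeneous polynomial `f` of
degree `d` to the degree-`d + i` homogeneous component of `Sq(f)`, extended additively. -/
noncomputable def SqOp (k i : ℕ) (f : MvPolynomial (Fin k) (ZMod 2)) :
    MvPolynomial (Fin k) (ZMod 2) :=
  ∑ d ∈ Finset.range (f.totalDegree + 1),
    homogeneousComponent (d + i) (SqTotal k (homogeneousComponent d f))

/-- The space of hit polynomials: finite sums of `Sq^i (f_i)` with `i > 0`. -/
noncomputable def hitSubmodule (k : ℕ) :
    Submodule (ZMod 2) (MvPolynomial (Fin k) (ZMod 2)) :=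
  Submodule.span (ZMod 2) {g | ∃ i f, 0 < i ∧ g = SqOp k i f}

/-- A polynomial is hit if it is a finite sum of `Sq^i (f_i)` with `i > 0`. -/
def IsHit (k : ℕ) (f : MvPolynomial (Fin k) (ZMod 2)) : Prop := f ∈ hitSubmodule k

/-- `(QP_k)_n`: the space of homogeneous polynomials of degree `n` modulo hit polynomials. -/
abbrev QP (k n : ℕ) :=
  ↥(homogeneousSubmodule (Fin k) (ZMod 2) n) ⧸
    ((hitSubmodule k).comap (homogeneousSubmodule (Fin k) (ZMod 2) n).subtype)

/-- `ω_{i+1}(x)` for the monomial with exponent vector `a`: the number of variables whose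
exponent has `i`-th binary digit equal to `1`. -/
def wvec (k : ℕ) (a : Fin k →₀ ℕ) (i : ℕ) : ℕ :=
  (Finset.univ.filter fun j : Fin k => Nat.testBit (a j) i).card

/-- Left lexicographic strict order on weight vectors. -/
def wlt (u v : ℕ → ℕ) : Prop := ∃ i, (∀ j, j < i → u j = v j) ∧ u i < v i

/-- Left lexicographic order on the exponent vectors themselves, and the order `x < y`
on monomials of the same degree: either `ω(x) < ω(y)` lexicographically, or
`ω(x) = ω(y)` and `(ν_1(x), …, ν_k(x))` precedes `(ν_1(y), …, ν_k(y))`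
lexicographically. -/
def monLT (k : ℕ) (a b : Fin k →₀ ℕ) : Prop :=
  wlt (wvec k a) (wvec k b) ∨
    ((∀ i, wvec k a i = wvec k b i) ∧ ∃ j : Fin k, (∀ i, i < j → a i = b i) ∧ a j < b j)

/-- A monomial (given by its exponent vector `a`) is inadmissible: there are monomials
`y_1, …, y_t` of the same degree with `y_j < x` such that `x - (y_1 + … + y_t)` is hit. -/
def Inadmissible (k : ℕ) (a : Fin k →₀ ℕ) : Prop :=
  ∃ (t : ℕ) (y : Fin t → (Fin k →₀ ℕ)),
    (∀ j, (∑ i : Fin k, y j i) = ∑ i : Fin k, a i) ∧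
    (∀ j, monLT k (y j) a) ∧
    IsHit k (MvPolynomial.monomial a (1 : ZMod 2) +
      ∑ j, MvPolynomial.monomial (y j) (1 : ZMod 2))

/-- A monomial is admissible if it is not inadmissible. -/
def Admissible (k : ℕ) (a : Fin k →₀ ℕ) : Prop := ¬ Inadmissible k a

/-- A monomial is strictly inadmissible: there are smaller monomials `y_1, …, y_t` of the
same degree such that `x - (y_1 + … + y_t)` lies in the span of the `Sq^u (g)` with
`1 ≤ u < 2^s`, where `s = max { i | ω_i(x) > 0 }`. -/
def StrictlyInadmissible (k : ℕ) (a : Fin k →₀ ℕ) : Prop :=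
  ∃ s : ℕ, 0 < s ∧ wvec k a (s - 1) ≠ 0 ∧ (∀ i, s ≤ i → wvec k a i = 0) ∧
    ∃ (t : ℕ) (y : Fin t → (Fin k →₀ ℕ)),
      (∀ j, (∑ i : Fin k, y j i) = ∑ i : Fin k, a i) ∧
      (∀ j, monLT k (y j) a) ∧
      (MvPolynomial.monomial a (1 : ZMod 2) +
          ∑ j, MvPolynomial.monomial (y j) (1 : ZMod 2)) ∈
        Submodule.span (ZMod 2) {g | ∃ u f, 1 ≤ u ∧ u < 2 ^ s ∧ g = SqOp k u f}


namespace StmtAux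

/-- bitwise containment -/
def BSub (c a : ℕ) : Prop := ∀ i, Nat.testBit c i = true → Nat.testBit a i = true

lemma bsub_zero (a : ℕ) : BSub 0 a := fun i h => by simp at h

lemma testBit_of_mod_eq {x y : ℕ} {i : ℕ} (h : x % 2^(i+1) = y % 2^(i+1)) :
    Nat.testBit x i = Nat.testBit y i := by
  have hx := Nat.testBit_mod_two_pow x (i+1) i
  have hy := Nat.testBit_mod_two_pow y (i+1) i
  simp only [Nat.lt_succ_self, decide_true, Bool.true_and] at hx hy
  rw [← hx, ← hy, h]

lemma bits_lt {n r : ℕ} (h : ∀ i, r ≤ i → Nat.testBit n i = false) : n < 2^r :=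
  Nat.lt_pow_two_of_testBit n (fun i hi => h i hi)

lemma mod_eq_zero_of_bits {c t : ℕ} (h : ∀ i, i < t → Nat.testBit c i = false) :
    c % 2^t = 0 := by
  have : ∀ i, Nat.testBit (c % 2^t) i = Nat.testBit 0 i := by
    intro i
    rw [Nat.testBit_mod_two_pow]
    by_cases hi : i < t
    · simp [hi, h i hi]
    · simp [hi]
  exact Nat.eq_of_testBit_eq this

/-- key bit flip : if `m % 2^(i+1) = 2^i` and `testBit n i = true` then
`testBit (n + m) i = false`. -/
lemma testBit_add_flip {n m i : ℕ} (hm : m % 2^(i+1) = 2^i) (hn : Nat.testBit n i = true) :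
    Nat.testBit (n + m) i = false := by
  have h1 : (n + m) % 2^(i+1) = (n % 2^(i+1) + 2^i) % 2^(i+1) := by
    conv_lhs => rw [Nat.add_mod, hm]
  have hdecomp : n % 2^(i+1) = n % 2^i + 2^i := by
    rw [Nat.mod_pow_succ]
    have hbit : n / 2^i % 2 = 1 := by
      have := Nat.testBit_eq_decide_div_mod_eq (x := n) (i := i)
      rw [hn] at this
      exact (decide_eq_true_eq.mp this.symm)
    rw [hbit]
    ring
  have h2 : (n % 2^(i+1) + 2^i) % 2^(i+1) = n % 2^i := by
    rw [hdecomp]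
    have : n % 2^i + 2^i + 2^i = n % 2^i + 2^(i+1) := by ring
    rw [this, Nat.add_mod_right]
    exact Nat.mod_eq_of_lt (lt_of_lt_of_le (Nat.mod_lt _ (Nat.two_pow_pos i))
      (Nat.pow_le_pow_right (by norm_num) (Nat.le_succ i)))
  have : (n + m) % 2^(i+1) = n % 2^i := h1.trans h2
  have hlt : (n + m) % 2^(i+1) < 2^i := this ▸ Nat.mod_lt _ (Nat.two_pow_pos i)
  have := Nat.testBit_mod_two_pow (n + m) (i+1) i
  simp only [Nat.lt_succ_self, decide_true, Bool.true_and] at this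
  rw [← this]
  exact Nat.testBit_lt_two_pow hlt


/- ### wvec lemmas -/

lemma wvec_congr {k : ℕ} {v w : Fin k →₀ ℕ} {i : ℕ}
    (h : ∀ j, Nat.testBit (v j) i = Nat.testBit (w j) i) : wvec k v i = wvec k w i := by
  unfold wvec
  congr 1
  apply Finset.filter_congr
  intro j _
  rw [h j]

lemma wvec_congr_mod {k : ℕ} {v w : Fin k →₀ ℕ} {i : ℕ}
    (h : ∀ j, (v j) % 2^(i+1) = (w j) % 2^(i+1)) : wvec k v i = wvec k w i :=
  wvec_congr (fun j => testBit_of_mod_eq (h j))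

/-- exponents of `a` all `< 2^r` from vanishing weights -/
lemma exp_lt_of_wvec {k r : ℕ} {a : Fin k →₀ ℕ} (hx : ∀ i, r ≤ i → wvec k a i = 0) (j : Fin k) :
    a j < 2^r := by
  apply bits_lt
  intro i hi
  have h0 := hx i hi
  unfold wvec at h0
  rw [Finset.card_eq_zero] at h0
  by_contra hb
  simp only [Bool.not_eq_false] at hb
  have : j ∈ Finset.univ.filter fun j : Fin k => Nat.testBit (a j) i := by
    simp [Finset.mem_filter, hb]
  rw [h0] at this
  exact absurd this (Finset.notMem_empty j)

/-- testBit of `a j + 2^r * d j` -/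
lemma testBit_concat {a d r i : ℕ} (ha : a < 2^r) :
    Nat.testBit (a + 2^r * d) i = if i < r then Nat.testBit a i else Nat.testBit d (i - r) := by
  rw [add_comm]
  exact Nat.testBit_two_pow_mul_add d ha i

/-- weights of a concatenated monomial -/
lemma wvec_concat_lo {k r : ℕ} {a d : Fin k →₀ ℕ} (ha : ∀ j, a j < 2^r) {i : ℕ} (hi : i < r) :
    wvec k (a + 2^r • d) i = wvec k a i := by
  apply wvec_congr
  intro j
  have : (a + 2^r • d) j = a j + 2^r * d j := by simp [mul_comm]
  rw [this, testBit_concat (ha j), if_pos hi]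

lemma wvec_concat_hi {k r : ℕ} {a d : Fin k →₀ ℕ} (ha : ∀ j, a j < 2^r) {i : ℕ} (hi : r ≤ i) :
    wvec k (a + 2^r • d) i = wvec k d (i - r) := by
  unfold wvec
  congr 1
  apply Finset.filter_congr
  intro j _
  have : (a + 2^r • d) j = a j + 2^r * d j := by simp [mul_comm]
  rw [this, testBit_concat (ha j), if_neg (by omega)]

/-- concatenation preserves the monomial order -/
lemma monLT_concat {k r : ℕ} {a z d : Fin k →₀ ℕ} (ha : ∀ j, a j < 2^r)
    (h : monLT k z d) : monLT k (a + 2^r • z) (a + 2^r • d) := by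
  rcases h with ⟨i0, heq, hlt⟩ | ⟨heq, j, hj, hjlt⟩
  · left
    refine ⟨r + i0, fun i hi => ?_, ?_⟩
    · by_cases hir : i < r
      · rw [wvec_concat_lo ha hir, wvec_concat_lo ha hir]
      · push_neg at hir
        rw [wvec_concat_hi ha hir, wvec_concat_hi ha hir]
        exact heq _ (by omega)
    · rw [wvec_concat_hi ha (by omega), wvec_concat_hi ha (by omega)]
      simpa using hlt
  · right
    constructor
    · intro i
      by_cases hir : i < r
      · rw [wvec_concat_lo ha hir, wvec_concat_lo ha hir]
      · push_neg at hir
        rw [wvec_concat_hi ha hir, wvec_concat_hi ha hir]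
        exact heq _
    · refine ⟨j, fun i hij => ?_, ?_⟩
      · simp [hj i hij]
      · have h1 : (a + 2^r • z) j = a j + 2^r * z j := by simp [mul_comm]
        have h2 : (a + 2^r • d) j = a j + 2^r * d j := by simp [mul_comm]
        rw [h1, h2]
        have : (2:ℕ)^r > 0 := Nat.two_pow_pos r
        exact Nat.add_lt_add_left ((Nat.mul_lt_mul_left this).mpr hjlt) _

lemma wvec_zero_of_lt {k s : ℕ} {b : Fin k →₀ ℕ} (hb : ∀ j, b j < 2^s) {i : ℕ} (hi : s ≤ i) :
    wvec k b i = 0 := by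
  unfold wvec
  rw [Finset.card_eq_zero, Finset.filter_eq_empty_iff]
  intro j _
  simp only [Bool.not_eq_true]
  exact Nat.testBit_lt_two_pow (lt_of_lt_of_le (hb j) (Nat.pow_le_pow_right (by norm_num) hi))

lemma mod_add_high {z c m q : ℕ} (hdvd : m ∣ q) : (z + q * c) % m = z % m := by
  obtain ⟨e, rfl⟩ := hdvd
  rw [mul_assoc, Nat.add_mul_mod_self_left]

/-- adding `2^s • c'` on top preserves the order, given `b` has exponents `< 2^s` -/
lemma monLT_lower_add {k s : ℕ} {b z c' : Fin k →₀ ℕ} (hb : ∀ j, b j < 2^s)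
    (h : monLT k z b) : monLT k (z + 2^s • c') (b + 2^s • c') := by
  have happ : ∀ (w : Fin k →₀ ℕ) (j : Fin k), (w + 2^s • c') j = w j + 2^s * c' j := by
    intro w j; simp [mul_comm]
  rcases h with ⟨i0, heq, hlt⟩ | ⟨heq, j, hj, hjlt⟩
  · have hi0s : i0 < s := by
      by_contra hcon
      push_neg at hcon
      rw [wvec_zero_of_lt hb hcon] at hlt
      omega
    left
    have hlo : ∀ i, i < s → ∀ (w : Fin k →₀ ℕ), wvec k (w + 2^s • c') i = wvec k w i := by
      intro i his w
      apply wvec_congr_mod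
      intro j
      rw [happ]
      exact mod_add_high (pow_dvd_pow 2 (by omega))
    refine ⟨i0, fun i hi => ?_, ?_⟩
    · rw [hlo i (by omega), hlo i (by omega)]
      exact heq i hi
    · rw [hlo i0 hi0s, hlo i0 hi0s]
      exact hlt
  · have hz : ∀ j, z j < 2^s := by
      intro j
      exact exp_lt_of_wvec (fun i hi => (heq i).trans (wvec_zero_of_lt hb hi)) j
    right
    constructor
    · intro i
      by_cases his : i < s
      · rw [wvec_concat_lo hz his, wvec_concat_lo hb his]
        exact heq i
      · push_neg at his
        rw [wvec_concat_hi hz his, wvec_concat_hi hb his]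
    · refine ⟨j, fun i hij => ?_, ?_⟩
      · rw [happ, happ, hj i hij]
      · rw [happ, happ]
        omega

/-- The key weight-vector lemma: a monomial `v = a + c + 2^r p` (pointwise) with
`0 ≠ c ⊆ a` bitwise is strictly smaller in the weight order than any `TOP`
agreeing with `a` modulo `2^r`. -/
lemma weight_lemma {k r : ℕ} {a TOP : Fin k →₀ ℕ} (ha : ∀ j, a j < 2^r)
    (c p : Fin k → ℕ) (hsub : ∀ j, BSub (c j) (a j)) (hc0 : ∃ j, c j ≠ 0)
    (v : Fin k →₀ ℕ) (hv : ∀ j, v j = a j + c j + 2^r * p j)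
    (htop : ∀ j, TOP j % 2^r = a j % 2^r) : wlt (wvec k v) (wvec k TOP) := by
  obtain ⟨j0, hj0⟩ := hc0
  have hex : ∃ i, ∃ j, Nat.testBit (c j) i = true := by
    obtain ⟨i, hi⟩ := Nat.exists_testBit_of_ne_zero hj0
    exact ⟨i, j0, hi⟩
  classical
  set istar := Nat.find hex with histar
  obtain ⟨jw, hjw⟩ : ∃ j, Nat.testBit (c j) istar = true := Nat.find_spec hex
  have hmin : ∀ i, i < istar → ∀ j, Nat.testBit (c j) i = false := by
    intro i hi j
    have := Nat.find_min hex hi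
    push_neg at this
    simpa using this j
  have hajw : Nat.testBit (a jw) istar = true := hsub jw istar hjw
  have histar_r : istar < r := by
    by_contra hcon
    push_neg at hcon
    have : a jw < 2^istar :=
      lt_of_lt_of_le (ha jw) (Nat.pow_le_pow_right (by norm_num) hcon)
    rw [Nat.testBit_lt_two_pow this] at hajw
    exact absurd hajw (by simp)
  -- part 1: modular agreement below istar
  have hmodv : ∀ i, i < istar → ∀ j, (v j) % 2^(i+1) = (a j) % 2^(i+1) := by
    intro i hi j
    have hcmod : (c j) % 2^(i+1) = 0 :=
      mod_eq_zero_of_bits (fun i' hi' => hmin i' (by omega) j)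
    obtain ⟨e, he⟩ := Nat.dvd_of_mod_eq_zero hcmod
    have : v j = a j + 2^(i+1) * (e + 2^(r-(i+1)) * p j) := by
      rw [hv j, he]
      have : (2:ℕ)^r = 2^(i+1) * 2^(r-(i+1)) := by
        rw [← pow_add]
        congr 1
        omega
      rw [this]
      ring
    rw [this, Nat.add_mul_mod_self_left]
  have hmodtop : ∀ i, i < r → ∀ j, (TOP j) % 2^(i+1) = (a j) % 2^(i+1) := by
    intro i hi j
    have h1 : (TOP j) % 2^(i+1) = ((TOP j) % 2^r) % 2^(i+1) :=
      (Nat.mod_mod_of_dvd _ (pow_dvd_pow 2 (by omega))).symm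
    have h2 : (a j) % 2^(i+1) = ((a j) % 2^r) % 2^(i+1) :=
      (Nat.mod_mod_of_dvd _ (pow_dvd_pow 2 (by omega))).symm
    rw [h1, h2, htop j]
  -- part 2: pointwise bit comparison at istar
  have hbit : ∀ j, Nat.testBit (c j) istar = true → Nat.testBit (v j) istar = false := by
    intro j hcj
    have hcmod : (c j) % 2^(istar+1) = 2^istar := by
      apply Nat.eq_of_testBit_eq
      intro i
      rw [Nat.testBit_mod_two_pow]
      rcases lt_trichotomy i istar with h | h | h
      · simp [hmin i h j, Nat.testBit_two_pow_of_ne (show istar ≠ i by omega)]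
      · subst h
        simp [hcj, Nat.testBit_two_pow_self]
      · have : ¬ (i < istar + 1) := by omega
        simp [this, Nat.testBit_two_pow_of_ne (show istar ≠ i by omega)]
    have hm : (c j + 2^r * p j) % 2^(istar+1) = 2^istar := by
      rw [mod_add_high (pow_dvd_pow 2 (by omega)) , hcmod]
    have : v j = a j + (c j + 2^r * p j) := by rw [hv j]; ring
    rw [this]
    exact testBit_add_flip hm (hsub j istar hcj)
  have hbit2 : ∀ j, Nat.testBit (c j) istar = false →
      Nat.testBit (v j) istar = Nat.testBit (a j) istar := by
    intro j hcj
    have hcmod : (c j) % 2^(istar+1) = 0 := by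
      apply mod_eq_zero_of_bits
      intro i hi
      rcases Nat.lt_succ_iff_lt_or_eq.mp hi with h | h
      · exact hmin i h j
      · subst h; exact hcj
    apply testBit_of_mod_eq
    obtain ⟨e, he⟩ := Nat.dvd_of_mod_eq_zero hcmod
    have : v j = a j + 2^(istar+1) * (e + 2^(r-(istar+1)) * p j) := by
      rw [hv j, he]
      have : (2:ℕ)^r = 2^(istar+1) * 2^(r-(istar+1)) := by
        rw [← pow_add]; congr 1; omega
      rw [this]; ring
    rw [this, Nat.add_mul_mod_self_left]
  -- assemble
  refine ⟨istar, fun i hi => ?_, ?_⟩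
  · rw [wvec_congr_mod (hmodv i hi), wvec_congr_mod (hmodtop i (by omega))]
  · rw [wvec_congr_mod (hmodtop istar histar_r)]
    unfold wvec
    apply Finset.card_lt_card
    constructor
    · intro j hj
      simp only [Finset.mem_filter, Finset.mem_univ, true_and] at hj ⊢
      by_cases hcj : Nat.testBit (c j) istar = true
      · rw [hbit j hcj] at hj; exact absurd hj (by simp)
      · rw [← hbit2 j (Bool.not_eq_true _ ▸ hcj)]
        exact hj
    · intro hcon
      have hjwmem : jw ∈ Finset.univ.filter fun j : Fin k => Nat.testBit (a j) istar := by
        simp [hajw]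
      have := hcon hjwmem
      simp only [Finset.mem_filter, Finset.mem_univ, true_and] at this
      rw [hbit jw hjw] at this
      exact absurd this (by simp)


end StmtAux

namespace StmtAux
/- ### bit helpers for doubling -/
lemma bsub_double {c m : ℕ} (h : BSub c m) : BSub (2*c) (2*m) := by
  intro i hi
  cases i with
  | zero => simp [Nat.testBit_zero, Nat.mul_mod_right] at hi
  | succ i =>
    rw [Nat.testBit_add_one] at hi ⊢
    rw [Nat.mul_div_cancel_left _ (by norm_num : (0:ℕ) < 2)] at hi ⊢
    exact h i hi

lemma bsub_even_to_odd {c m : ℕ} (h : BSub c (2*m)) : BSub c (2*m+1) := by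
  intro i hi
  cases i with
  | zero => simp [Nat.testBit_zero]
  | succ i =>
    have := h _ hi
    rw [Nat.testBit_add_one] at this ⊢
    have h1 : 2*m/2 = m := by omega
    have h2 : (2*m+1)/2 = m := by omega
    rw [h2]; rw [h1] at this; exact this

lemma bsub_odd {c m : ℕ} (h : BSub c m) : BSub (2*c+1) (2*m+1) := by
  intro i hi
  cases i with
  | zero => simp [Nat.testBit_zero]
  | succ i =>
    rw [Nat.testBit_add_one] at hi ⊢
    have h1 : (2*c+1)/2 = c := by omega
    have h2 : (2*m+1)/2 = m := by omega
    rw [h1] at hi; rw [h2]; exact h i hi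

lemma bsub_even {c m : ℕ} (h : BSub c (2*m)) : Nat.testBit c 0 = false := by
  have h2 : Nat.testBit (2*m) 0 = false := by
    simp [Nat.testBit_zero, Nat.mul_mod_right]
  by_contra hb
  simp only [Bool.not_eq_false] at hb
  rw [h 0 hb] at h2
  exact Bool.noConfusion h2

lemma bsub_succ_odd {c m : ℕ} (h : BSub c (2*m)) : BSub (c+1) (2*m+1) := by
  have hceven : c % 2 = 0 := by
    have := bsub_even h
    simp [Nat.testBit_zero] at this
    omega
  intro i hi
  cases i with
  | zero => simp [Nat.testBit_zero]
  | succ i =>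
    rw [Nat.testBit_add_one] at hi ⊢
    have h1 : (c+1)/2 = c/2 := by omega
    have h2 : (2*m+1)/2 = m := by omega
    rw [h1] at hi
    have := h (i+1) (by rw [Nat.testBit_add_one]; exact hi)
    rw [Nat.testBit_add_one] at this
    have h3 : 2*m/2 = m := by omega
    rw [h3] at this
    rw [h2]
    exact this

lemma bsub_zero' (a : ℕ) : BSub 0 a := by intro i hi; simp at hi

lemma eq_zero_of_bsub_zero {c : ℕ} (h : BSub c 0) : c = 0 := by
  apply Nat.zero_of_testBit_eq_false
  intro i
  by_contra hb
  simp only [Bool.not_eq_false] at hb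
  simpa using h i hb

/- ### expand lemmas -/
variable {k : ℕ}

local notation "PP" => MvPolynomial (Fin k) (ZMod 2)

lemma expand_monomial' (q : ℕ) (d : Fin k →₀ ℕ) (κ : ZMod 2) :
    expand q (monomial d κ : PP) = monomial (q • d) κ := by
  rw [expand_monomial, monomial_eq]

lemma expand_eq_sum (q : ℕ) (P : PP) :
    expand q P = ∑ w ∈ P.support, monomial (q • w) (coeff w P) := by
  conv_lhs => rw [P.as_sum]
  rw [map_sum]
  exact Finset.sum_congr rfl fun w _ => expand_monomial' q w _

lemma support_expand_subset (q : ℕ) (P : PP) {w : Fin k →₀ ℕ}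
    (hw : w ∈ (expand q P).support) : ∃ w' ∈ P.support, w = q • w' := by
  rw [expand_eq_sum] at hw
  have := MvPolynomial.support_sum (s := P.support)
    (f := fun w' => (monomial (q • w') (coeff w' P) : PP)) hw
  simp only [Finset.mem_biUnion] at this
  obtain ⟨w', hw', hmem⟩ := this
  refine ⟨w', hw', ?_⟩
  have := support_monomial_subset hmem
  simpa using this

lemma smul_finsupp_injective (q : ℕ) (hq : q ≠ 0) :
    Function.Injective (fun w : Fin k →₀ ℕ => q • w) := by
  intro u v huv
  ext j
  have : q * u j = q * v j := by
    have := DFunLike.congr_fun huv j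
    simpa [Finsupp.smul_apply] using this
  exact Nat.eq_of_mul_eq_mul_left (Nat.pos_of_ne_zero hq) this

lemma coeff_expand_smul {q : ℕ} (hq : q ≠ 0) (v : Fin k →₀ ℕ) (P : PP) :
    coeff (q • v) (expand q P) = coeff v P := by
  classical
  rw [expand_eq_sum, coeff_sum]
  simp only [coeff_monomial]
  rw [Finset.sum_eq_single v]
  · simp
  · intro w hw hne
    rw [if_neg]
    intro hcon
    exact hne (smul_finsupp_injective q hq hcon)
  · intro hv
    rw [if_pos rfl, notMem_support_iff.mp hv]

end StmtAux

namespace StmtAux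
variable {k : ℕ}
local notation "PP" => MvPolynomial (Fin k) (ZMod 2)

lemma expand_two_eq_sq (P : PP) : expand 2 P = P ^ 2 :=
  MvPolynomial.expand_zmod P

lemma support_single_pow {j : Fin k} {n : ℕ} :
    ∀ w ∈ (((X j + X j^2 : PP))^n).support, ∃ cc, BSub cc n ∧ w = Finsupp.single j (n + cc) := by
  induction n using Nat.strong_induction_on with
  | _ n IH =>
    rcases Nat.eq_zero_or_pos n with hn | hn
    · subst hn
      intro w hw
      simp only [pow_zero] at hw
      have := support_monomial_subset (by simpa using hw : w ∈ ((monomial 0 1 : PP)).support)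
      refine ⟨0, bsub_zero' _, ?_⟩
      simp at this ⊢
      simp [this]
    rcases Nat.even_or_odd n with ⟨m, hm⟩ | ⟨m, hm⟩
    · -- n = 2m
      have hm2 : n = 2 * m := by omega
      intro w hw
      rw [hm2, pow_mul', ← expand_two_eq_sq] at hw
      obtain ⟨w', hw', rfl⟩ := support_expand_subset 2 _ hw
      obtain ⟨cc, hcc, rfl⟩ := IH m (by omega) w' hw'
      refine ⟨2 * cc, by rw [hm2]; exact bsub_double hcc, ?_⟩
      rw [Finsupp.smul_single]
      congr 1
      simp only [smul_eq_mul]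
      omega
    · -- n = 2m + 1
      have hm2 : n = 2 * m + 1 := by omega
      intro w hw
      rw [hm2, pow_succ] at hw
      have hsub := MvPolynomial.support_mul _ _ hw
      rw [Finset.mem_add] at hsub
      obtain ⟨u, hu, w2, hw2, rfl⟩ := hsub
      obtain ⟨cc, hcc, rfl⟩ := IH (2*m) (by omega) u hu
      have hw2' : w2 ∈ ((X j : PP)).support ∪ ((X j^2 : PP)).support :=
        MvPolynomial.support_add hw2
      rw [support_X, support_X_pow] at hw2'
      simp only [Finset.mem_union, Finset.mem_singleton] at hw2'
      rcases hw2' with rfl | rfl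
      · refine ⟨cc, by rw [hm2]; exact bsub_even_to_odd hcc, ?_⟩
        rw [← Finsupp.single_add]
        congr 1
        omega
      · refine ⟨cc + 1, by rw [hm2]; exact bsub_succ_odd hcc, ?_⟩
        rw [← Finsupp.single_add]
        congr 1
        omega

lemma coeff_single_pow {j : Fin k} {n : ℕ} :
    coeff (Finsupp.single j n) (((X j + X j^2 : PP))^n) = 1 := by
  induction n using Nat.strong_induction_on with
  | _ n IH =>
    rcases Nat.eq_zero_or_pos n with hn | hn
    · subst hn
      simp
    rcases Nat.even_or_odd n with ⟨m, hm⟩ | ⟨m, hm⟩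
    · have hm2 : n = 2 * m := by omega
      rw [hm2, pow_mul', ← expand_two_eq_sq]
      have : Finsupp.single j (2*m) = (2 : ℕ) • Finsupp.single j m := by
        rw [Finsupp.smul_single]; congr 1
      rw [this, coeff_expand_smul (by norm_num)]
      exact IH m (by omega)
    · have hm2 : n = 2 * m + 1 := by omega
      rw [hm2, pow_succ]
      classical
      rw [coeff_mul]
      rw [Finset.sum_eq_single (Finsupp.single j (2*m), Finsupp.single j 1)]
      · have h1 : coeff (Finsupp.single j (2*m)) ((X j + X j^2 : PP)^(2*m)) = 1 :=
          IH (2*m) (by omega)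
        have h2 : coeff (Finsupp.single j 1) ((X j + X j^2 : PP)) = 1 := by
          rw [coeff_add, coeff_X]
          have : coeff (Finsupp.single j 1) ((X j : PP)^2) = 0 := by
            rw [coeff_X_pow, if_neg]
            intro hcon
            have := DFunLike.congr_fun hcon j
            simp at this
          rw [this, add_zero]
          exact if_pos rfl
        rw [h1, h2, mul_one]
      · rintro ⟨u, w2⟩ hmem hne
        rw [Finset.HasAntidiagonal.mem_antidiagonal] at hmem
        by_cases hu : coeff u ((X j + X j^2 : PP)^(2*m)) = 0
        · rw [hu, zero_mul]
        by_cases hw2 : coeff w2 ((X j + X j^2 : PP)) = 0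
        · rw [hw2, mul_zero]
        exfalso
        obtain ⟨cc, hcc, rfl⟩ := support_single_pow u (mem_support_iff.mpr hu)
        have hw2' : w2 ∈ ((X j : PP)).support ∪ ((X j^2 : PP)).support :=
          MvPolynomial.support_add (mem_support_iff.mpr hw2)
        rw [support_X, support_X_pow] at hw2'
        simp only [Finset.mem_union, Finset.mem_singleton] at hw2'
        rcases hw2' with rfl | rfl
        · rw [← Finsupp.single_add] at hmem
          have := DFunLike.congr_fun hmem j
          simp only [Finsupp.single_eq_same] at this
          have hcc0 : cc = 0 := by omega
          subst hcc0
          apply hne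
          simp
        · rw [← Finsupp.single_add] at hmem
          have := DFunLike.congr_fun hmem j
          simp only [Finsupp.single_eq_same] at this
          omega
      · intro hcon
        exfalso
        apply hcon
        rw [Finset.HasAntidiagonal.mem_antidiagonal, ← Finsupp.single_add]

end StmtAux

namespace StmtAux
variable {k : ℕ}
local notation "PP" => MvPolynomial (Fin k) (ZMod 2)

lemma char2_add_self (x : PP) : x + x = 0 := by
  have h2 : (1 : ZMod 2) + 1 = 0 := by decide
  calc x + x = ((1 : ZMod 2) + 1) • x := by rw [add_smul, one_smul]
    _ = 0 := by rw [h2, zero_smul]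

lemma sq_monomial_single (j : Fin k) (n : ℕ) :
    SqTotal k (monomial (Finsupp.single j n) 1) = (X j + X j^2 : PP)^n := by
  rw [← X_pow_eq_monomial, map_pow]
  congr 1
  simp [SqTotal]

lemma sq_monomial_mul (u v : Fin k →₀ ℕ) :
    SqTotal k (monomial (u + v) (1 : ZMod 2)) =
      SqTotal k (monomial u 1) * SqTotal k (monomial v 1) := by
  rw [← map_mul, monomial_mul, one_mul]

lemma support_sq_monomial (a : Fin k →₀ ℕ) :
    ∀ w ∈ (SqTotal k (monomial a (1 : ZMod 2))).support, ∃ c : Fin k → ℕ,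
      (∀ j, BSub (c j) (a j)) ∧ ∀ j, w j = a j + c j := by
  classical
  induction a using Finsupp.induction with
  | zero =>
    intro w hw
    rw [monomial_zero', C_1, map_one] at hw
    have h1 : (1:PP) = monomial 0 1 := by rw [monomial_zero', C_1]
    rw [h1] at hw
    have := support_monomial_subset hw
    simp only [Finset.mem_singleton] at this
    subst this
    exact ⟨fun _ => 0, fun j => bsub_zero' _, fun j => by simp⟩
  | single_add j n f hjf hn IH =>
    intro w hw
    rw [sq_monomial_mul] at hw
    have hsub := MvPolynomial.support_mul _ _ hw
    rw [Finset.mem_add] at hsub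
    obtain ⟨u, hu, w2, hw2, rfl⟩ := hsub
    rw [sq_monomial_single] at hu
    obtain ⟨cc, hcc, rfl⟩ := support_single_pow u hu
    obtain ⟨c2, h2sub, h2eq⟩ := IH w2 hw2
    have hfj : f j = 0 := Finsupp.notMem_support_iff.mp hjf
    have hc2j : c2 j = 0 := by
      apply eq_zero_of_bsub_zero
      rw [← hfj] at *
      exact h2sub j
    refine ⟨fun j' => if j' = j then cc else c2 j', fun j' => ?_, fun j' => ?_⟩
    · by_cases hj' : j' = j
      · subst hj'
        simp only [if_pos rfl, Finsupp.add_apply, Finsupp.single_eq_same, hfj, add_zero]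
        exact hcc
      · simp only [if_neg hj', Finsupp.add_apply, Finsupp.single_apply,
          if_neg (Ne.symm hj' : ¬ j = j'), zero_add]
        exact h2sub j'
    · by_cases hj' : j' = j
      · subst hj'
        simp only [if_pos rfl, Finsupp.add_apply, Finsupp.single_eq_same, hfj, add_zero,
          h2eq j', hc2j]
        simp
      · simp only [if_neg hj', Finsupp.add_apply, Finsupp.single_apply,
          if_neg (Ne.symm hj' : ¬ j = j'), zero_add, h2eq j']

lemma coeff_sq_monomial (a : Fin k →₀ ℕ) :
    coeff a (SqTotal k (monomial a (1 : ZMod 2))) = 1 := by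
  classical
  induction a using Finsupp.induction with
  | zero =>
    rw [monomial_zero', C_1, map_one]
    simp
  | single_add j n f hjf hn IH =>
    rw [sq_monomial_mul, coeff_mul]
    have hfj : f j = 0 := Finsupp.notMem_support_iff.mp hjf
    rw [Finset.sum_eq_single (Finsupp.single j n, f)]
    · rw [sq_monomial_single]
      simp only
      rw [coeff_single_pow, IH, one_mul]
    · rintro ⟨u, w2⟩ hmem hne
      rw [Finset.HasAntidiagonal.mem_antidiagonal] at hmem
      by_cases hu : coeff u (SqTotal k (monomial (Finsupp.single j n) (1:ZMod 2))) = 0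
      · rw [hu, zero_mul]
      by_cases hw2 : coeff w2 (SqTotal k (monomial f (1:ZMod 2))) = 0
      · rw [hw2, mul_zero]
      exfalso
      rw [sq_monomial_single] at hu
      obtain ⟨cc, hcc, rfl⟩ := support_single_pow u (mem_support_iff.mpr hu)
      obtain ⟨c2, h2sub, h2eq⟩ := support_sq_monomial f w2 (mem_support_iff.mpr hw2)
      have hc2j : c2 j = 0 := by
        apply eq_zero_of_bsub_zero
        rw [← hfj] at *
        exact h2sub j
      have hatj := DFunLike.congr_fun hmem j
      simp only [Finsupp.add_apply, Finsupp.single_eq_same, h2eq j, hfj, hc2j] at hatj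
      have hcc0 : cc = 0 := by omega
      subst hcc0
      apply hne
      have hw2f : w2 = f := by
        ext j'
        by_cases hj' : j' = j
        · subst hj'; rw [h2eq, hfj, hc2j]
        · have := DFunLike.congr_fun hmem j'
          simp only [Finsupp.add_apply, Finsupp.single_apply,
            if_neg (Ne.symm hj' : ¬ j = j')] at this
          omega
      rw [hw2f, add_zero]
    · intro hcon
      exfalso
      exact hcon (Finset.HasAntidiagonal.mem_antidiagonal.mpr rfl)

/-- the remainder `R = Sq(x^a) - x^a` -/
noncomputable def Rrem (a : Fin k →₀ ℕ) : PP :=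
  SqTotal k (monomial a 1) + monomial a 1

lemma sq_monomial_eq_add (a : Fin k →₀ ℕ) :
    SqTotal k (monomial a (1:ZMod 2)) = monomial a 1 + Rrem a := by
  rw [Rrem, add_comm (SqTotal k ((monomial a) (1:ZMod 2))) ((monomial a) (1:ZMod 2)),
    ← add_assoc, char2_add_self, zero_add]

lemma support_Rrem (a : Fin k →₀ ℕ) :
    ∀ w ∈ (Rrem a).support, ∃ c : Fin k → ℕ,
      (∀ j, BSub (c j) (a j)) ∧ (∀ j, w j = a j + c j) ∧ (∃ j, c j ≠ 0) := by
  intro w hw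
  rw [mem_support_iff] at hw
  have hwa : w ≠ a := by
    rintro rfl
    apply hw
    rw [Rrem, coeff_add, coeff_sq_monomial, coeff_monomial, if_pos rfl]
    decide
  have hcw : coeff w (SqTotal k (monomial a (1:ZMod 2))) ≠ 0 := by
    intro h0
    apply hw
    rw [Rrem, coeff_add, h0, coeff_monomial, if_neg (by exact fun h => hwa h.symm), add_zero]
  obtain ⟨c, hsub, heq⟩ := support_sq_monomial a w (mem_support_iff.mpr hcw)
  refine ⟨c, hsub, heq, ?_⟩
  by_contra hcon
  push_neg at hcon
  apply hwa
  ext j'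
  rw [heq j', hcon j', add_zero]

end StmtAux

namespace StmtAux
variable {k : ℕ}
local notation "PP" => MvPolynomial (Fin k) (ZMod 2)

/- ### degree lemmas -/

lemma degree_eq_sum_univ (v : Fin k →₀ ℕ) : Finsupp.degree v = ∑ i : Fin k, v i := by
  rw [Finsupp.degree]
  apply Finset.sum_subset (Finset.subset_univ _)
  intro i _ hni
  exact Finsupp.notMem_support_iff.mp hni

lemma degree_add' (u v : Fin k →₀ ℕ) :
    Finsupp.degree (u + v) = Finsupp.degree u + Finsupp.degree v := by
  rw [degree_eq_sum_univ, degree_eq_sum_univ, degree_eq_sum_univ, ← Finset.sum_add_distrib]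
  exact Finset.sum_congr rfl fun i _ => rfl

lemma degree_smul' (q : ℕ) (v : Fin k →₀ ℕ) :
    Finsupp.degree (q • v) = q * Finsupp.degree v := by
  rw [degree_eq_sum_univ, degree_eq_sum_univ, Finset.mul_sum]
  exact Finset.sum_congr rfl fun i _ => rfl

/- ### homogeneity lemmas -/

lemma isHomog_monomial' (v : Fin k →₀ ℕ) (κ : ZMod 2) :
    (monomial v κ : PP).IsHomogeneous (Finsupp.degree v) :=
  isHomogeneous_monomial _ rfl

lemma hc_of_homog {n : ℕ} {P : PP} (h : P.IsHomogeneous n) (m : ℕ) :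
    homogeneousComponent m P = if m = n then P else 0 :=
  homogeneousComponent_of_mem ((mem_homogeneousSubmodule _ _).mpr h)

lemma expand_isHomog {q d : ℕ} {P : PP} (h : P.IsHomogeneous d) :
    (expand q P).IsHomogeneous (q * d) := by
  rw [expand_eq_sum]
  apply IsHomogeneous.sum
  intro w hw
  have hdw : Finsupp.degree w = d := by
    rw [Finsupp.degree_eq_weight_one]
    exact h (mem_support_iff.mp hw)
  have : Finsupp.degree (q • w) = q * d := by rw [degree_smul', hdw]
  exact isHomogeneous_monomial _ this

lemma supp_hc_subset {D : ℕ} {P : PP} {w : Fin k →₀ ℕ}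
    (hw : w ∈ (homogeneousComponent D P).support) :
    w ∈ P.support ∧ Finsupp.degree w = D := by
  rw [mem_support_iff, coeff_homogeneousComponent] at hw
  by_cases hd : Finsupp.degree w = D
  · rw [if_pos hd] at hw
    exact ⟨mem_support_iff.mpr hw, hd⟩
  · rw [if_neg hd] at hw
    exact absurd rfl hw

/- ### hit submodule lemmas -/

lemma sqop_of_homog {d : ℕ} (u : ℕ) {g : PP} (hg : g.IsHomogeneous d) :
    SqOp k u g = homogeneousComponent (d + u) (SqTotal k g) := by
  by_cases hg0 : g = 0
  · subst hg0
    simp [SqOp]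
  · have htd : g.totalDegree = d := hg.totalDegree hg0
    rw [SqOp, htd]
    rw [Finset.sum_eq_single d]
    · rw [hc_of_homog hg, if_pos rfl]
    · intro d' _ hne
      rw [hc_of_homog hg, if_neg hne, map_zero, map_zero]
    · intro hcon
      exact absurd (Finset.self_mem_range_succ d) hcon

lemma hc_sq_mem_hit {d D : ℕ} {g : PP} (hg : g.IsHomogeneous d) (hD : d < D) :
    homogeneousComponent D (SqTotal k g) ∈ hitSubmodule k := by
  have hD' : D = d + (D - d) := by omega
  rw [hD', ← sqop_of_homog (D - d) hg]
  exact Submodule.subset_span ⟨D - d, g, by omega, rfl⟩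

lemma hc_hit {D : ℕ} {h : PP} (hh : h ∈ hitSubmodule k) :
    homogeneousComponent D h ∈ hitSubmodule k := by
  refine Submodule.span_induction ?_ ?_ ?_ ?_ hh
  · rintro x ⟨u, f, hu, rfl⟩
    rw [SqOp, map_sum]
    apply Submodule.sum_mem
    intro d _
    have hhom : (homogeneousComponent (d + u) (SqTotal k (homogeneousComponent d f))).IsHomogeneous
        (d + u) := homogeneousComponent_isHomogeneous _ _
    rw [hc_of_homog hhom]
    by_cases hDe : D = d + u
    · rw [if_pos hDe]
      exact hc_sq_mem_hit (homogeneousComponent_isHomogeneous d f) (by omega)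
    · rw [if_neg hDe]
      exact Submodule.zero_mem _
  · rw [map_zero]; exact Submodule.zero_mem _
  · intro x y _ _ hx hy
    rw [map_add]; exact Submodule.add_mem _ hx hy
  · intro κ x _ hx
    rw [map_smul]; exact Submodule.smul_mem _ _ hx

/- ### the submodule of smaller monomials -/

noncomputable def SmallM (k : ℕ) (D : ℕ) (TOP : Fin k →₀ ℕ) :
    Submodule (ZMod 2) (MvPolynomial (Fin k) (ZMod 2)) :=
  Submodule.span (ZMod 2)
    {g | ∃ v : Fin k →₀ ℕ, Finsupp.degree v = D ∧ monLT k v TOP ∧ g = monomial v 1}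

lemma monomial_mem_small {D : ℕ} {TOP v : Fin k →₀ ℕ} (hd : Finsupp.degree v = D)
    (hlt : monLT k v TOP) : (monomial v 1 : PP) ∈ SmallM k D TOP :=
  Submodule.subset_span ⟨v, hd, hlt, rfl⟩

lemma mem_small_of_support {D : ℕ} {TOP : Fin k →₀ ℕ} {P : PP}
    (h : ∀ v ∈ P.support, Finsupp.degree v = D ∧ monLT k v TOP) : P ∈ SmallM k D TOP := by
  have hP : P = ∑ v ∈ P.support, (coeff v P) • (monomial v 1 : PP) := by
    conv_lhs => rw [P.as_sum]
    apply Finset.sum_congr rfl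
    intro v _
    rw [smul_monomial, smul_eq_mul, mul_one]
  rw [hP]
  apply Submodule.sum_mem
  intro v hv
  exact Submodule.smul_mem _ _ (monomial_mem_small (h v hv).1 (h v hv).2)

lemma hc_small {D : ℕ} {TOP : Fin k →₀ ℕ} {P : PP} (h : P ∈ SmallM k D TOP) :
    homogeneousComponent D P ∈ SmallM k D TOP := by
  refine Submodule.span_induction ?_ ?_ ?_ ?_ h
  · rintro x ⟨v, hd, hlt, rfl⟩
    rw [hc_of_homog (hd ▸ isHomog_monomial' v 1) D, if_pos rfl]
    exact monomial_mem_small hd hlt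
  · rw [map_zero]; exact Submodule.zero_mem _
  · intro x y _ _ hx hy
    rw [map_add]; exact Submodule.add_mem _ hx hy
  · intro κ x _ hx
    rw [map_smul]; exact Submodule.smul_mem _ _ hx

lemma hc_M {D : ℕ} {TOP : Fin k →₀ ℕ} {P : PP}
    (h : P ∈ hitSubmodule k ⊔ SmallM k D TOP) :
    homogeneousComponent D P ∈ hitSubmodule k ⊔ SmallM k D TOP := by
  rw [Submodule.mem_sup] at h
  obtain ⟨y, hy, z, hz, rfl⟩ := h
  rw [map_add]
  exact Submodule.add_mem _ (Submodule.mem_sup_left (hc_hit hy))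
    (Submodule.mem_sup_right (hc_small hz))

end StmtAux

namespace StmtAux
variable {k : ℕ}
local notation "PP" => MvPolynomial (Fin k) (ZMod 2)

/- ### the shift lemma -/

lemma finsupp_degree_sub {a w : Fin k →₀ ℕ} (h : a ≤ w) :
    Finsupp.degree w = Finsupp.degree a + Finsupp.degree (w - a) := by
  have : w = a + (w - a) := by
    ext j
    have := Finsupp.le_def.mp h j
    simp only [Finsupp.add_apply, Finsupp.tsub_apply]
    omega
  conv_lhs => rw [this]
  exact degree_add' _ _

lemma hc_monomial_mul (a : Fin k →₀ ℕ) (m : ℕ) (Q : PP) :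
    homogeneousComponent (Finsupp.degree a + m) ((monomial a 1 : PP) * Q) =
      monomial a 1 * homogeneousComponent m Q := by
  ext w
  rw [coeff_homogeneousComponent, coeff_monomial_mul', coeff_monomial_mul']
  by_cases haw : a ≤ w
  · rw [if_pos haw, if_pos haw, coeff_homogeneousComponent]
    by_cases hdeg : Finsupp.degree (w - a) = m
    · rw [if_pos hdeg, if_pos (by rw [finsupp_degree_sub haw, hdeg])]
    · rw [if_neg hdeg, if_neg (by rw [finsupp_degree_sub haw]; omega), mul_zero]
  · rw [if_neg haw, if_neg haw]
    split <;> rfl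

/- ### expand lemmas -/

lemma expand_expand' (p q : ℕ) (f : PP) :
    expand p (expand q f) = expand (p * q) f := by
  have : (expand p).comp (expand q) = (expand (p * q) : PP →ₐ[ZMod 2] PP) := by
    apply MvPolynomial.algHom_ext
    intro j
    simp only [AlgHom.coe_comp, Function.comp_apply, expand_X]
    rw [map_pow, expand_X, ← pow_mul]
  exact DFunLike.congr_fun this f

lemma sq_expand_commute (r : ℕ) (f : PP) :
    SqTotal k (expand (2^r) f) = expand (2^r) (SqTotal k f) := by
  induction r generalizing f with
  | zero => simp [expand_one_apply]
  | succ r IH =>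
    have hcomm2 : ∀ g : PP, SqTotal k (expand 2 g) = expand 2 (SqTotal k g) := by
      intro g
      have : (SqTotal k).comp (expand 2) = (expand 2 : PP →ₐ[ZMod 2] PP).comp (SqTotal k) := by
        apply MvPolynomial.algHom_ext
        intro j
        simp only [AlgHom.coe_comp, Function.comp_apply, expand_X]
        rw [map_pow]
        have h1 : SqTotal k (X j) = X j + X j ^ 2 := by simp [SqTotal]
        rw [h1, map_add, expand_X, map_pow, expand_X]
        rw [← expand_two_eq_sq (X j + X j ^2 : PP), map_add, expand_X, map_pow, expand_X]
      exact DFunLike.congr_fun this g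
    have h2 : (2:ℕ)^(r+1) = 2^r * 2 := by rw [pow_succ]
    rw [h2, ← expand_expand', ← expand_expand', IH, hcomm2]

lemma hc_expand {q : ℕ} (hq : 0 < q) (m : ℕ) (Q : PP) :
    homogeneousComponent (q * m) (expand q Q) = expand q (homogeneousComponent m Q) := by
  conv_lhs => rw [expand_eq_sum]
  rw [map_sum, homogeneousComponent_apply, map_sum]
  rw [Finset.sum_filter]
  apply Finset.sum_congr rfl
  intro w hw
  rw [hc_of_homog (isHomog_monomial' (q • w) _)]
  rw [expand_monomial']
  by_cases hdw : Finsupp.degree w = m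
  · rw [if_pos (by rw [degree_smul', hdw]), if_pos hdw]
  · rw [if_neg (by rw [degree_smul']; intro hcon; exact hdw (by
      have := Nat.eq_of_mul_eq_mul_left hq hcon; omega)), if_neg hdw]

/- ### lower bound on degrees in Sq of homogeneous -/

lemma low_deg_sq {d : ℕ} {g : PP} (hg : g.IsHomogeneous d) :
    ∀ w ∈ (SqTotal k g).support, d ≤ Finsupp.degree w := by
  intro w hw
  have hrepr : SqTotal k g = ∑ v ∈ g.support, (coeff v g) • SqTotal k (monomial v 1) := by
    conv_lhs => rw [g.as_sum]
    rw [map_sum]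
    apply Finset.sum_congr rfl
    intro v _
    rw [← map_smul, smul_monomial, smul_eq_mul, mul_one]
  rw [hrepr] at hw
  have := MvPolynomial.support_sum hw
  simp only [Finset.mem_biUnion] at this
  obtain ⟨v, hv, hw2⟩ := this
  have hw3 : w ∈ (SqTotal k (monomial v (1:ZMod 2))).support :=
    Finsupp.support_smul hw2
  obtain ⟨c, hsub, heq⟩ := support_sq_monomial v w hw3
  have hdv : Finsupp.degree v = d := by
    rw [Finsupp.degree_eq_weight_one]
    exact hg (mem_support_iff.mp hv)
  rw [← hdv, degree_eq_sum_univ, degree_eq_sum_univ]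
  apply Finset.sum_le_sum
  intro i _
  rw [heq i]
  omega

end StmtAux

namespace StmtAux
variable {k : ℕ}
local notation "PP" => MvPolynomial (Fin k) (ZMod 2)

/-- The key lemma: `x · Sq^u(g)^{2^r}` is hit modulo strictly smaller monomials. -/
lemma key_lemma {r u e D : ℕ} (hr : 0 < r) (hu : 0 < u)
    {a TOP : Fin k →₀ ℕ} (ha : ∀ j, a j < 2^r) (htop : ∀ j, TOP j % 2^r = a j % 2^r)
    {g : PP} (hg : g.IsHomogeneous e)
    (hD : D = Finsupp.degree a + 2^r * (e + u)) :
    (monomial a 1 : PP) * expand (2^r) (homogeneousComponent (e+u) (SqTotal k g)) ∈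
      hitSubmodule k ⊔ SmallM k D TOP := by
  set q : ℕ := 2^r with hqdef
  have hq : 0 < q := Nat.two_pow_pos r
  set G' : PP := expand q (SqTotal k g) with hG'
  -- the identity
  have hid : homogeneousComponent D (SqTotal k ((monomial a 1 : PP) * expand q g)) =
      (monomial a 1 : PP) * expand q (homogeneousComponent (e+u) (SqTotal k g)) +
        homogeneousComponent D (Rrem a * G') := by
    rw [map_mul, sq_expand_commute, ← hG', sq_monomial_eq_add, add_mul, map_add]
    congr 1
    rw [hD, hc_monomial_mul, hG', hc_expand hq]
  -- hit part
  have hhit : homogeneousComponent D (SqTotal k ((monomial a 1 : PP) * expand q g)) ∈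
      hitSubmodule k := by
    apply hc_sq_mem_hit (d := Finsupp.degree a + q * e)
    · have h1 : ((monomial a 1 : PP)).IsHomogeneous (Finsupp.degree a) := isHomog_monomial' a 1
      exact h1.mul (expand_isHomog hg)
    · rw [hD]
      have h1 : 0 < q * u := Nat.mul_pos hq hu
      have h2 : q * (e + u) = q * e + q * u := by ring
      omega
  -- small part
  have hsmall : homogeneousComponent D (Rrem a * G') ∈ SmallM k D TOP := by
    apply mem_small_of_support
    intro w hw
    obtain ⟨hwsupp, hwdeg⟩ := supp_hc_subset hw
    refine ⟨hwdeg, ?_⟩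
    have hsub2 := MvPolynomial.support_mul _ _ hwsupp
    rw [Finset.mem_add] at hsub2
    obtain ⟨w1, hw1, w2, hw2, rfl⟩ := hsub2
    obtain ⟨c, hcsub, hceq, hc0⟩ := support_Rrem a w1 hw1
    obtain ⟨p', hp', rfl⟩ := support_expand_subset q _ hw2
    left
    apply weight_lemma ha c (fun j => p' j) hcsub hc0
    · intro j
      simp only [Finsupp.add_apply, Finsupp.smul_apply, smul_eq_mul]
      rw [hceq j]
    · exact htop
  rw [Submodule.mem_sup]
  refine ⟨homogeneousComponent D (SqTotal k ((monomial a 1 : PP) * expand q g)),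
    hhit, homogeneousComponent D (Rrem a * G'), hsmall, ?_⟩
  rw [hid, add_assoc, char2_add_self, add_zero]

end StmtAux

namespace StmtAux
variable {k : ℕ}
local notation "PP" => MvPolynomial (Fin k) (ZMod 2)

lemma claimA {r D : ℕ} (hr : 0 < r) {a TOP : Fin k →₀ ℕ}
    (ha : ∀ j, a j < 2^r) (htop : ∀ j, TOP j % 2^r = a j % 2^r)
    {h : PP} (hh : h ∈ hitSubmodule k) :
    homogeneousComponent D ((monomial a 1 : PP) * expand (2^r) h) ∈
      hitSubmodule k ⊔ SmallM k D TOP := by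
  set q : ℕ := 2^r with hqdef
  refine Submodule.span_induction ?_ ?_ ?_ ?_ hh
  · rintro x ⟨u, f, hu, rfl⟩
    rw [SqOp, map_sum, Finset.mul_sum, map_sum]
    apply Submodule.sum_mem
    intro d _
    set g : PP := homogeneousComponent d f with hgdef
    by_cases hcase : D = Finsupp.degree a + q * (d + u)
    · apply hc_M
      rw [hcase]
      exact key_lemma hr hu ha htop (homogeneousComponent_isHomogeneous d f) rfl
    · have hhom : ((monomial a 1 : PP) * expand q (homogeneousComponent (d+u) (SqTotal k g))).IsHomogeneous
          (Finsupp.degree a + q * (d + u)) :=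
        (isHomog_monomial' a 1).mul (expand_isHomog (homogeneousComponent_isHomogeneous _ _))
      rw [hc_of_homog hhom, if_neg hcase]
      exact Submodule.zero_mem _
  · rw [map_zero, mul_zero, map_zero]
    exact Submodule.zero_mem _
  · intro x y _ _ hx hy
    rw [map_add, mul_add, map_add]
    exact Submodule.add_mem _ hx hy
  · intro κ x _ hx
    rw [map_smul, mul_smul_comm, map_smul]
    exact Submodule.smul_mem _ _ hx

end StmtAux

namespace StmtAux
variable {k : ℕ}
local notation "PP" => MvPolynomial (Fin k) (ZMod 2)

/-- absorbing `y^{2^s}` into `Sq^u g` when `u < 2^s` -/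
lemma cross_reduce {s u d : ℕ} (hu : 0 < u) (hus : u < 2^s)
    {g : PP} (hg : g.IsHomogeneous d) (c' : Fin k →₀ ℕ) :
    homogeneousComponent (d+u) (SqTotal k g) * (monomial (2^s • c') 1 : PP) =
      homogeneousComponent (Finsupp.degree ((2^s : ℕ) • c') + (d + u))
        (SqTotal k (g * monomial (2^s • c') 1)) := by
  have hY2 : (monomial ((2^s : ℕ) • c') 1 : PP) = expand (2^s) (monomial c' 1) :=
    (expand_monomial' _ _ _).symm
  have hsqY2 : SqTotal k (monomial ((2^s : ℕ) • c') (1:ZMod 2)) =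
      monomial ((2^s : ℕ) • c') 1 + expand (2^s) (Rrem c') := by
    rw [hY2, sq_expand_commute, sq_monomial_eq_add, map_add, ← hY2]
  rw [map_mul, hsqY2, mul_add, map_add]
  have hfirst : homogeneousComponent (Finsupp.degree ((2^s : ℕ) • c') + (d + u))
      (SqTotal k g * monomial ((2^s : ℕ) • c') 1) =
      homogeneousComponent (d+u) (SqTotal k g) * monomial ((2^s : ℕ) • c') 1 := by
    rw [mul_comm, hc_monomial_mul, mul_comm]
  have hsecond : homogeneousComponent (Finsupp.degree ((2^s : ℕ) • c') + (d + u))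
      (SqTotal k g * expand (2^s) (Rrem c')) = 0 := by
    apply homogeneousComponent_eq_zero'
    intro w hw
    have hsub2 := MvPolynomial.support_mul _ _ hw
    rw [Finset.mem_add] at hsub2
    obtain ⟨w1, hw1, w2, hw2, rfl⟩ := hsub2
    have hd1 : d ≤ Finsupp.degree w1 := low_deg_sq hg w1 hw1
    obtain ⟨w', hw', rfl⟩ := support_expand_subset (2^s) _ hw2
    obtain ⟨cc, hccsub, hcceq, j0, hj0⟩ := support_Rrem c' w' hw'
    have hdw' : Finsupp.degree c' + 1 ≤ Finsupp.degree w' := by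
      rw [degree_eq_sum_univ, degree_eq_sum_univ]
      have h1 : ∑ i : Fin k, w' i = ∑ i : Fin k, c' i + ∑ i : Fin k, cc i := by
        rw [← Finset.sum_add_distrib]
        exact Finset.sum_congr rfl fun i _ => by rw [hcceq i]
      have h2 : 1 ≤ ∑ i : Fin k, cc i := by
        calc 1 ≤ cc j0 := Nat.one_le_iff_ne_zero.mpr hj0
        _ ≤ ∑ i : Fin k, cc i := Finset.single_le_sum (fun i _ => Nat.zero_le _)
            (Finset.mem_univ j0)
      omega
    rw [degree_add', degree_smul', degree_smul']
    have hd2 : 2^s * (Finsupp.degree c' + 1) ≤ 2^s * Finsupp.degree w' :=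
      Nat.mul_le_mul_left _ hdw'
    have h3 : 2^s * (Finsupp.degree c' + 1) = 2^s * Finsupp.degree c' + 2^s := by ring
    omega
  rw [hfirst, hsecond, add_zero]

lemma claimA' {r s D : ℕ} (hr : 0 < r) {a TOP c' : Fin k →₀ ℕ}
    (ha : ∀ j, a j < 2^r) (htop : ∀ j, TOP j % 2^r = a j % 2^r)
    {h : PP} (hh : h ∈ Submodule.span (ZMod 2) {g | ∃ u f, 1 ≤ u ∧ u < 2 ^ s ∧ g = SqOp k u f}) :
    homogeneousComponent D ((monomial a 1 : PP) *
        expand (2^r) (h * monomial ((2^s : ℕ) • c') 1)) ∈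
      hitSubmodule k ⊔ SmallM k D TOP := by
  set q : ℕ := 2^r with hqdef
  refine Submodule.span_induction ?_ ?_ ?_ ?_ hh
  · rintro x ⟨u, f, hu1, hu2, rfl⟩
    rw [SqOp, Finset.sum_mul, map_sum, Finset.mul_sum, map_sum]
    apply Submodule.sum_mem
    intro d _
    rw [cross_reduce (by omega) hu2 (homogeneousComponent_isHomogeneous d f) c']
    set e : ℕ := Finsupp.degree ((2^s:ℕ) • c') + d with hedef
    have hghom : ((homogeneousComponent d f) * monomial ((2^s:ℕ) • c') 1 : PP).IsHomogeneous e := by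
      rw [hedef, add_comm]
      exact (homogeneousComponent_isHomogeneous d f).mul (isHomog_monomial' _ _)
    have hidx : Finsupp.degree ((2^s:ℕ) • c') + (d + u) = e + u := by omega
    rw [hidx]
    by_cases hcase : D = Finsupp.degree a + q * (e + u)
    · apply hc_M
      rw [hcase]
      exact key_lemma hr (by omega) ha htop hghom rfl
    · have hhom : ((monomial a 1 : PP) * expand q (homogeneousComponent (e+u)
          (SqTotal k ((homogeneousComponent d f) * monomial ((2^s:ℕ) • c') 1)))).IsHomogeneous
          (Finsupp.degree a + q * (e + u)) :=
        (isHomog_monomial' a 1).mul (expand_isHomog (homogeneousComponent_isHomogeneous _ _))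
      rw [hc_of_homog hhom, if_neg hcase]
      exact Submodule.zero_mem _
  · rw [zero_mul, map_zero, mul_zero, map_zero]
    exact Submodule.zero_mem _
  · intro x y _ _ hx hy
    rw [add_mul, map_add, mul_add, map_add]
    exact Submodule.add_mem _ hx hy
  · intro κ x _ hx
    rw [smul_mul_assoc, map_smul, mul_smul_comm, map_smul]
    exact Submodule.smul_mem _ _ hx

end StmtAux

namespace StmtAux
variable {k : ℕ}
local notation "PP" => MvPolynomial (Fin k) (ZMod 2)

lemma small_extract {D : ℕ} {TOP : Fin k →₀ ℕ} {P : PP} (h : P ∈ SmallM k D TOP) :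
    ∃ (t : ℕ) (y : Fin t → (Fin k →₀ ℕ)),
      (∀ j, Finsupp.degree (y j) = D ∧ monLT k (y j) TOP) ∧
      P = ∑ j, monomial (y j) 1 := by
  have hκ : ∀ z : ZMod 2, z = 0 ∨ z = 1 := by decide
  refine Submodule.span_induction ?_ ?_ ?_ ?_ h
  · rintro x ⟨v, hd, hlt, rfl⟩
    exact ⟨1, fun _ => v, fun _ => ⟨hd, hlt⟩, by simp⟩
  · exact ⟨0, fun j => 0, fun j => j.elim0, by simp⟩
  · rintro x y _ _ ⟨t1, y1, hy1, rfl⟩ ⟨t2, y2, hy2, rfl⟩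
    refine ⟨t1 + t2, Fin.append y1 y2, ?_, ?_⟩
    · intro j
      rcases lt_or_ge j.1 t1 with h | h
      · have : ∃ j1 : Fin t1, j = Fin.castAdd t2 j1 := ⟨⟨j.1, h⟩, by ext; simp⟩
        obtain ⟨j1, rfl⟩ := this
        rw [Fin.append_left]
        exact hy1 j1
      · have : ∃ j2 : Fin t2, j = Fin.natAdd t1 j2 := by
          have hj2 : j.1 - t1 < t2 := by omega
          refine ⟨⟨j.1 - t1, hj2⟩, by ext; simp; omega⟩
        obtain ⟨j2, rfl⟩ := this
        rw [Fin.append_right]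
        exact hy2 j2
    · rw [Fin.sum_univ_add]
      congr 1
      · exact Finset.sum_congr rfl fun j _ => by rw [Fin.append_left]
      · exact Finset.sum_congr rfl fun j _ => by rw [Fin.append_right]
  · rintro κ x _ ⟨t, y, hy, rfl⟩
    rcases hκ κ with rfl | rfl
    · exact ⟨0, fun j => 0, fun j => j.elim0, by simp⟩
    · exact ⟨t, y, hy, by rw [one_smul]⟩

lemma inadmissible_of_mem {TOP : Fin k →₀ ℕ}
    (h : (monomial TOP 1 : PP) ∈ hitSubmodule k ⊔ SmallM k (Finsupp.degree TOP) TOP) :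
    Inadmissible k TOP := by
  rw [Submodule.mem_sup] at h
  obtain ⟨hh, hhmem, ss, hssmem, heq⟩ := h
  obtain ⟨t, y, hy, rfl⟩ := small_extract hssmem
  refine ⟨t, y, ?_, fun j => (hy j).2, ?_⟩
  · intro j
    rw [← degree_eq_sum_univ, ← degree_eq_sum_univ]
    exact (hy j).1
  · show (monomial TOP 1 : PP) + ∑ j, monomial (y j) 1 ∈ hitSubmodule k
    rw [← heq, add_assoc, char2_add_self, add_zero]
    exact hhmem

end StmtAux

namespace StmtAux
variable {k : ℕ}
local notation "PP" => MvPolynomial (Fin k) (ZMod 2)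

lemma expand_monomial_one (q : ℕ) (v : Fin k →₀ ℕ) :
    (monomial a 1 : PP) * expand q (monomial v 1) = monomial (a + q • v) 1 := by
  rw [expand_monomial', monomial_mul, one_mul]

end StmtAux

open StmtAux in
theorem stmt16' (k : ℕ) (a b c : Fin k →₀ ℕ) (r s : ℕ) (hr : 0 < r) (hs : 0 < s)
    (hx : ∀ i, r ≤ i → wvec k a i = 0)
    (hw1 : wvec k b (s - 1) ≠ 0)
    (hw2 : ∀ i, s ≤ i → wvec k b i = 0) :
    (Inadmissible k b → Inadmissible k (a + 2 ^ r • b)) ∧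
    (StrictlyInadmissible k b →
      Inadmissible k (a + 2 ^ r • b + 2 ^ (r + s) • c)) := by
  have ha : ∀ j, a j < 2^r := exp_lt_of_wvec hx
  have hq : (0:ℕ) < 2^r := Nat.two_pow_pos r
  constructor
  · -- part (i)
    rintro ⟨t, z, hzdeg, hzlt, hzhit⟩
    set TOP : Fin k →₀ ℕ := a + 2^r • b with hTOP
    set D : ℕ := Finsupp.degree TOP with hD
    have htop : ∀ j, TOP j % 2^r = a j % 2^r := by
      intro j
      rw [hTOP]
      simp only [Finsupp.add_apply, Finsupp.smul_apply, smul_eq_mul]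
      exact Nat.add_mul_mod_self_left _ _ _
    have hdz : ∀ j, Finsupp.degree (z j) = Finsupp.degree b := by
      intro j
      rw [degree_eq_sum_univ, degree_eq_sum_univ]
      exact hzdeg j
    have hDval : D = Finsupp.degree a + 2^r * Finsupp.degree b := by
      rw [hD, hTOP, degree_add', degree_smul']
    set h : MvPolynomial (Fin k) (ZMod 2) := monomial b 1 + ∑ j, monomial (z j) 1 with hh
    have hmain : (monomial a 1 : MvPolynomial (Fin k) (ZMod 2)) * expand (2^r) h =
        monomial TOP 1 + ∑ j, monomial (a + 2^r • z j) 1 := by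
      rw [hh, map_add, map_sum, mul_add, Finset.mul_sum, expand_monomial_one]
      congr 1
      exact Finset.sum_congr rfl fun j _ => expand_monomial_one _ _
    have hcmain : homogeneousComponent D ((monomial a 1 : MvPolynomial (Fin k) (ZMod 2)) *
        expand (2^r) h) = monomial TOP 1 + ∑ j, monomial (a + 2^r • z j) 1 := by
      rw [hmain, map_add, map_sum]
      congr 1
      · rw [hc_of_homog (isHomog_monomial' TOP 1), if_pos hD]
      · apply Finset.sum_congr rfl
        intro j _
        rw [hc_of_homog (isHomog_monomial' _ 1), if_pos]
        rw [degree_add', degree_smul', hdz j, hDval]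
    have hM := claimA (D := D) (TOP := TOP) hr ha htop hzhit
    rw [hcmain] at hM
    have hsmallsum : (∑ j, monomial (a + 2^r • z j) 1 : MvPolynomial (Fin k) (ZMod 2)) ∈
        SmallM k D TOP := by
      apply Submodule.sum_mem
      intro j _
      apply monomial_mem_small
      · rw [degree_add', degree_smul', hdz j, hDval]
      · exact monLT_concat ha (hzlt j)
    apply inadmissible_of_mem
    rw [← hD]
    have : (monomial TOP 1 : MvPolynomial (Fin k) (ZMod 2)) =
        (monomial TOP 1 + ∑ j, monomial (a + 2^r • z j) 1) +
          ∑ j, monomial (a + 2^r • z j) 1 := by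
      rw [add_assoc, char2_add_self, add_zero]
    rw [this]
    exact Submodule.add_mem _ hM (Submodule.mem_sup_right hsmallsum)
  · -- part (ii)
    rintro ⟨s', hs'pos, hb1', hb2', t, z, hzdeg, hzlt, hspan⟩
    have hss' : s' = s := by
      by_contra hne
      rcases lt_or_gt_of_ne hne with hlt | hlt
      · exact hw1 (hb2' (s-1) (by omega))
      · exact hb1' (hw2 (s'-1) (by omega))
    subst hss'
    have hb : ∀ j, b j < 2^s' := exp_lt_of_wvec hw2
    set TOP : Fin k →₀ ℕ := a + 2^r • b + 2^(r+s') • c with hTOP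
    set D : ℕ := Finsupp.degree TOP with hD
    have hTOP2 : TOP = a + 2^r • (b + 2^s' • c) := by
      ext j
      rw [hTOP]
      simp only [Finsupp.add_apply, Finsupp.smul_apply, smul_eq_mul]
      rw [pow_add]
      ring
    have htop : ∀ j, TOP j % 2^r = a j % 2^r := by
      intro j
      rw [hTOP2]
      simp only [Finsupp.add_apply, Finsupp.smul_apply, smul_eq_mul]
      exact Nat.add_mul_mod_self_left _ _ _
    have hdz : ∀ j, Finsupp.degree (z j) = Finsupp.degree b := by
      intro j
      rw [degree_eq_sum_univ, degree_eq_sum_univ]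
      exact hzdeg j
    have hDval : D = Finsupp.degree a
        + 2^r * (Finsupp.degree b + Finsupp.degree ((2^s' : ℕ) • c)) := by
      rw [hD, hTOP2, degree_add', degree_smul', degree_add']
    set h : MvPolynomial (Fin k) (ZMod 2) := monomial b 1 + ∑ j, monomial (z j) 1 with hh
    have hmul : h * monomial ((2^s' : ℕ) • c) 1 =
        monomial (b + (2^s' : ℕ) • c) 1 + ∑ j, monomial (z j + (2^s' : ℕ) • c) 1 := by
      rw [hh, add_mul, Finset.sum_mul, monomial_mul, one_mul]
      congr 1
      exact Finset.sum_congr rfl fun j _ => by rw [monomial_mul, one_mul]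
    have hmain : (monomial a 1 : MvPolynomial (Fin k) (ZMod 2)) *
        expand (2^r) (h * monomial ((2^s' : ℕ) • c) 1) =
        monomial TOP 1 + ∑ j, monomial (a + 2^r • (z j + (2^s' : ℕ) • c)) 1 := by
      rw [hmul, map_add, map_sum, mul_add, Finset.mul_sum, expand_monomial_one, ← hTOP2]
      congr 1
      exact Finset.sum_congr rfl fun j _ => expand_monomial_one _ _
    have hdegsmall : ∀ j, Finsupp.degree (a + 2^r • (z j + (2^s' : ℕ) • c)) = D := by
      intro j
      rw [degree_add', degree_smul', degree_add', hdz j, hDval]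
    have hcmain : homogeneousComponent D ((monomial a 1 : MvPolynomial (Fin k) (ZMod 2)) *
        expand (2^r) (h * monomial ((2^s' : ℕ) • c) 1)) =
        monomial TOP 1 + ∑ j, monomial (a + 2^r • (z j + (2^s' : ℕ) • c)) 1 := by
      rw [hmain, map_add, map_sum]
      congr 1
      · rw [hc_of_homog (isHomog_monomial' TOP 1), if_pos hD]
      · apply Finset.sum_congr rfl
        intro j _
        rw [hc_of_homog (isHomog_monomial' _ 1), if_pos (hdegsmall j).symm]
    have hM := claimA' (D := D) (TOP := TOP) (c' := c) hr ha htop hspan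
    rw [hcmain] at hM
    have hsmallsum : (∑ j, monomial (a + 2^r • (z j + (2^s' : ℕ) • c)) 1 :
        MvPolynomial (Fin k) (ZMod 2)) ∈ SmallM k D TOP := by
      apply Submodule.sum_mem
      intro j _
      apply monomial_mem_small (hdegsmall j)
      rw [hTOP2]
      exact monLT_concat ha (monLT_lower_add hb (hzlt j))
    apply inadmissible_of_mem
    rw [← hD]
    have hfin : (monomial TOP 1 : MvPolynomial (Fin k) (ZMod 2)) =
        (monomial TOP 1 + ∑ j, monomial (a + 2^r • (z j + (2^s' : ℕ) • c)) 1) +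
          ∑ j, monomial (a + 2^r • (z j + (2^s' : ℕ) • c)) 1 := by
      rw [add_assoc, char2_add_self, add_zero]
    rw [hfin]
    exact Submodule.add_mem _ hM (Submodule.mem_sup_right hsmallsum)

/-- Theorem 2.9 (Kameko, Sum): let `x, y, w` be monomials in `P_k` (given by exponent
vectors `a, c, b`) with `ω_i(x) = 0` for `i > r > 0`, `ω_s(w) ≠ 0`, `ω_i(w) = 0` for
`i > s > 0`.
(i) If `w` is inadmissible then so is `x · w^{2^r}`.
(ii) If `w` is strictly inadmissible then `x · w^{2^r} · y^{2^{r+s}}` is inadmissible. -/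
theorem stmt16 (k : ℕ) (a b c : Fin k →₀ ℕ) (r s : ℕ) (hr : 0 < r) (hs : 0 < s)
    (hx : ∀ i, r ≤ i → wvec k a i = 0)
    (hw1 : wvec k b (s - 1) ≠ 0)
    (hw2 : ∀ i, s ≤ i → wvec k b i = 0) :
    (Inadmissible k b → Inadmissible k (a + 2 ^ r • b)) ∧
    (StrictlyInadmissible k b →
      Inadmissible k (a + 2 ^ r • b + 2 ^ (r + s) • c)) := by
  exact stmt16' k a b c r s hr hs hx hw1 hw2
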